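/- arXiv:2005.11418 — 3 statements merged into one kernel-verified Lean document; each statement's English description precedes it below -/
import Mathlib

section
/- Consider f₁(x) = x²/2 and f₂(x) = -x²/2 on ℝ. For FedAvg with constant stepsize η > 0 and Q local gradient-descent steps followed by averaging, the 2×2 iteration matrix (1/2)·D^{Q-1}·𝟙𝟙ᵀ·D with D = diag(1-η, 1+η) has eigenvalues 0 and ((1+η)^Q + (1-η)^Q)/2, and for any Q > 1 and η > 0 the nonzero eigenvalue strictly exceeds 1. -/
lemma aux_pow_le (η : ℝ) (hη : 0 < η) (n : ℕ) : (1 - η)^n ≤ (1 + η)^n := by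
  calc (1 - η)^n ≤ |(1 - η)^n| := le_abs_self _
    _ = |1 - η|^n := by rw [abs_pow]
    _ ≤ (1 + η)^n := by
        apply pow_le_pow_left₀ (abs_nonneg _)
        rw [abs_le]; constructor <;> nlinarith

lemma aux_gt (η : ℝ) (hη : 0 < η) (Q : ℕ) (hQ : 2 ≤ Q) :
    2 < (1 + η)^Q + (1 - η)^Q := by
  induction Q, hQ using Nat.le_induction with
  | base => ring_nf; nlinarith
  | succ n hn ih =>
      have h1 : (1 - η)^n ≤ (1 + η)^n := aux_pow_le η hη n
      have h2 : (0:ℝ) < (1 + η)^n := by positivity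
      calc (2:ℝ) < (1 + η)^n + (1 - η)^n := ih
        _ ≤ (1 + η)^(n+1) + (1 - η)^(n+1) := by
            rw [pow_succ, pow_succ]; nlinarith

theorem stmt_6 (η : ℝ) (hη : 0 < η) (Q : ℕ) (hQ : 1 < Q)
    (D J M : Matrix (Fin 2) (Fin 2) ℝ)
    (hD : D = Matrix.diagonal ![1 - η, 1 + η])
    (hJ : J = Matrix.of fun _ _ => (1 : ℝ))
    (hM : M = (1/2 : ℝ) • (D ^ (Q - 1) * J * D)) :
    (∃ v : Fin 2 → ℝ, v ≠ 0 ∧ M.mulVec v = (0 : ℝ) • v) ∧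
    (∃ v : Fin 2 → ℝ, v ≠ 0 ∧
      M.mulVec v = (((1 + η)^Q + (1 - η)^Q) / 2) • v) ∧
    1 < ((1 + η)^Q + (1 - η)^Q) / 2 := by
  obtain ⟨n, rfl⟩ : ∃ n, Q = n + 2 := ⟨Q - 2, by omega⟩
  have hQ1 : n + 2 - 1 = n + 1 := by omega
  subst hD hJ hM
  have hpow : (Matrix.diagonal ![1 - η, 1 + η]) ^ (n + 2 - 1)
      = Matrix.diagonal ![(1 - η)^(n+1), (1 + η)^(n+1)] := by
    have hv : (![1 - η, 1 + η] : Fin 2 → ℝ) ^ (n+1)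
        = ![(1 - η)^(n+1), (1 + η)^(n+1)] := by
      funext i; fin_cases i <;> simp [Pi.pow_apply]
    rw [hQ1, Matrix.diagonal_pow, hv]
  refine ⟨⟨![1 + η, -(1 - η)], ?_, ?_⟩, ⟨![(1 - η)^(n+1), (1 + η)^(n+1)], ?_, ?_⟩, ?_⟩
  · intro h
    have := congrFun h 0
    simp at this
    linarith
  · funext i
    rw [hpow]
    fin_cases i <;>
      simp [Matrix.mulVec, dotProduct, Matrix.mul_apply, Fin.sum_univ_two,
        Matrix.diagonal] <;> ring
  · intro h
    have := congrFun h 1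
    simp at this
    nlinarith
  · funext i
    rw [hpow]
    fin_cases i <;>
      simp [Matrix.mulVec, dotProduct, Matrix.mul_apply, Fin.sum_univ_two,
        Matrix.diagonal] <;> ring
  · have := aux_gt η hη (n+2) (by omega)
    linarith
end

section
/- For the divergence example with diminishing stepsizes, with Q > 1, η^r = 1/√r for r ≢ 1 (mod Q) and η^{kQ+1} = 1/2, the nonzero eigenvalue λ₂ = (1/4)·∏_{r=kQ+2}^{(k+1)Q-1}(1 - 1/√r)·(1 - 1/√(kQ)) + (3/4)·∏_{r=kQ+2}^{(k+1)Q-1}(1 + 1/√r)·(1 + 1/√(kQ)) of the round map is strictly larger than 1 for every k ≥ 1. -/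
lemma aux_one_sub (s : Finset ℕ) (f : ℕ → ℝ) (h0 : ∀ i ∈ s, 0 ≤ f i)
    (h1 : ∀ i ∈ s, f i ≤ 1) :
    1 - ∑ i ∈ s, f i ≤ ∏ i ∈ s, (1 - f i) := by
  induction s using Finset.cons_induction with
  | empty => simp
  | cons a s ha ih =>
    rw [Finset.sum_cons, Finset.prod_cons]
    have h0a := h0 a (Finset.mem_cons_self a s)
    have h1a := h1 a (Finset.mem_cons_self a s)
    have ih' := ih (fun i hi => h0 i (Finset.mem_cons_of_mem hi))
      (fun i hi => h1 i (Finset.mem_cons_of_mem hi))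
    have hsum : 0 ≤ ∑ i ∈ s, f i :=
      Finset.sum_nonneg fun i hi => h0 i (Finset.mem_cons_of_mem hi)
    nlinarith [mul_le_mul_of_nonneg_left ih' (by linarith : (0:ℝ) ≤ 1 - f a),
      mul_nonneg h0a hsum]

lemma aux_one_add (s : Finset ℕ) (f : ℕ → ℝ) (h0 : ∀ i ∈ s, 0 ≤ f i) :
    1 + ∑ i ∈ s, f i ≤ ∏ i ∈ s, (1 + f i) := by
  induction s using Finset.cons_induction with
  | empty => simp
  | cons a s ha ih =>
    rw [Finset.sum_cons, Finset.prod_cons]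
    have h0a := h0 a (Finset.mem_cons_self a s)
    have ih' := ih fun i hi => h0 i (Finset.mem_cons_of_mem hi)
    have hsum : 0 ≤ ∑ i ∈ s, f i :=
      Finset.sum_nonneg fun i hi => h0 i (Finset.mem_cons_of_mem hi)
    nlinarith

theorem stmt_8 (Q k : ℕ) (hQ : 1 < Q) (hk : 1 ≤ k) :
    1 < (1/4 : ℝ) *
          (∏ r ∈ Finset.Icc (k * Q + 2) ((k + 1) * Q - 1), (1 - 1 / Real.sqrt (r : ℝ))) *
          (1 - 1 / Real.sqrt ((k * Q : ℕ) : ℝ))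
        + (3/4 : ℝ) *
          (∏ r ∈ Finset.Icc (k * Q + 2) ((k + 1) * Q - 1), (1 + 1 / Real.sqrt (r : ℝ))) *
          (1 + 1 / Real.sqrt ((k * Q : ℕ) : ℝ)) := by
  set S := Finset.Icc (k * Q + 2) ((k + 1) * Q - 1)
  set f : ℕ → ℝ := fun r => 1 / Real.sqrt (r : ℝ) with hf
  have hkQ2 : 2 ≤ k * Q := by nlinarith
  have hf0 : ∀ i ∈ S, 0 ≤ f i := by
    intro i _
    exact div_nonneg zero_le_one (Real.sqrt_nonneg _)
  have hf1 : ∀ i ∈ S, f i ≤ 1 := by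
    intro i hi
    have hi1 : (1:ℕ) ≤ i := by
      have := (Finset.mem_Icc.1 hi).1; omega
    have : (1:ℝ) ≤ Real.sqrt i := by
      rw [show (1:ℝ) = Real.sqrt 1 by simp]
      exact Real.sqrt_le_sqrt (by exact_mod_cast hi1)
    rw [hf, div_le_one (by linarith)]
    exact this
  set T := ∑ i ∈ S, f i with hT
  have hT0 : 0 ≤ T := Finset.sum_nonneg hf0
  have hprod1 : 1 - T ≤ ∏ r ∈ S, (1 - f r) := aux_one_sub S f hf0 hf1
  have hprod2 : 1 + T ≤ ∏ r ∈ S, (1 + f r) := aux_one_add S f hf0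
  set s : ℝ := 1 / Real.sqrt ((k * Q : ℕ) : ℝ) with hs
  have hsqrt1 : (1:ℝ) < Real.sqrt ((k * Q : ℕ) : ℝ) := by
    rw [show (1:ℝ) = Real.sqrt 1 by simp]
    apply Real.sqrt_lt_sqrt (by norm_num)
    exact_mod_cast hkQ2.trans_lt' one_lt_two
  have hs0 : 0 < s := by
    rw [hs]; positivity
  have hs1 : s < 1 := by
    rw [hs, div_lt_one (by linarith)]
    exact hsqrt1
  have hA : (1 - T) * (1 - s) ≤ (∏ r ∈ S, (1 - f r)) * (1 - s) :=
    mul_le_mul_of_nonneg_right hprod1 (by linarith)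
  have hC : (1 + T) * (1 + s) ≤ (∏ r ∈ S, (1 + f r)) * (1 + s) :=
    mul_le_mul_of_nonneg_right hprod2 (by linarith)
  nlinarith [mul_nonneg hT0 hs0.le]
end

section
/- Suppose f is L-smooth (∇f is L-Lipschitz) and λ' = λ + (1/η)(x' - x₀). If the augmented Lagrangian L(x,x₀,λ) = f(x) + ⟨λ, x - x₀⟩ + (1/(2η))‖x - x₀‖² is approximately minimized in x so that ∇f(x') + λ + (1/η)(x' - x₀) = e with ‖e‖² ≤ ε₁, then L(x', x₀, λ) - L(x, x₀, λ) ≤ -((1-2Lη)/(2η))‖x' - x‖² + ε₁/(2L). -/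
open scoped RealInnerProductSpace

lemma descent_aux {E : Type*} [NormedAddCommGroup E] [InnerProductSpace ℝ E]
    [CompleteSpace E]
    (f : E → ℝ) (L : ℝ) (hL : 0 ≤ L) (hdiff : Differentiable ℝ f)
    (hlip : ∀ x y : E, ‖gradient f x - gradient f y‖ ≤ L * ‖x - y‖)
    (a b : E) :
    f a + ⟪gradient f a, b - a⟫ - L / 2 * ‖b - a‖ ^ 2 ≤ f b := by
  set v := b - a with hv
  have hline : ∀ t : ℝ, HasDerivAt (fun t : ℝ => f (a + t • v))
      ⟪gradient f (a + t • v), v⟫ t := by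
    intro t
    have h1 : HasDerivAt (fun t : ℝ => a + t • v) v t := by
      simpa using ((hasDerivAt_id t).smul_const v).const_add a
    have h2 := (hdiff (a + t • v)).hasGradientAt.hasFDerivAt
    have := h2.comp_hasDerivAt t h1
    simpa [Function.comp_def] using this
  set g : ℝ → ℝ := fun t => f (a + t • v) - t * ⟪gradient f a, v⟫ + L * t ^ 2 / 2 * ‖v‖ ^ 2
    with hg
  have hgd : ∀ t : ℝ, HasDerivAt g
      (⟪gradient f (a + t • v), v⟫ - ⟪gradient f a, v⟫ + L * t * ‖v‖ ^ 2) t := by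
    intro t
    have h1 : HasDerivAt (fun t : ℝ => t * ⟪gradient f a, v⟫) ⟪gradient f a, v⟫ t := by
      simpa using (hasDerivAt_id t).mul_const _
    have h2 : HasDerivAt (fun t : ℝ => L * t ^ 2 / 2 * ‖v‖ ^ 2) (L * t * ‖v‖ ^ 2) t := by
      have : HasDerivAt (fun t : ℝ => t ^ 2) (2 * t) t := by
        simpa using hasDerivAt_pow 2 t
      have := ((this.const_mul L).div_const 2).mul_const (‖v‖ ^ 2)
      rw [show L * t * ‖v‖ ^ 2 = L * (2 * t) / 2 * ‖v‖ ^ 2 by ring]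
      exact this
    exact ((hline t).sub h1).add h2
  have hmono : MonotoneOn g (Set.Icc 0 1) := by
    apply monotoneOn_of_deriv_nonneg (convex_Icc 0 1)
    · exact (fun t _ => ((hgd t).continuousAt).continuousWithinAt)
    · exact fun t _ => ((hgd t).differentiableAt).differentiableWithinAt
    · intro t ht
      rw [interior_Icc] at ht
      rw [(hgd t).deriv]
      have h1 : ⟪gradient f (a + t • v), v⟫ - ⟪gradient f a, v⟫
          = ⟪gradient f (a + t • v) - gradient f a, v⟫ := by
        rw [inner_sub_left]
      have h2 : -(‖gradient f (a + t • v) - gradient f a‖ * ‖v‖)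
          ≤ ⟪gradient f (a + t • v) - gradient f a, v⟫ :=
        neg_le_of_abs_le (abs_real_inner_le_norm _ _)
      have h3 : ‖gradient f (a + t • v) - gradient f a‖ ≤ L * ‖t • v‖ := by
        simpa using hlip (a + t • v) a
      have h4 : ‖t • v‖ = t * ‖v‖ := by
        rw [norm_smul, Real.norm_eq_abs, abs_of_pos ht.1]
      rw [h4] at h3
      nlinarith [norm_nonneg v, mul_le_mul_of_nonneg_right h3 (norm_nonneg v),
        norm_nonneg (gradient f (a + t • v) - gradient f a)]
  have h01 : g 0 ≤ g 1 := hmono (by norm_num) (by norm_num) (by norm_num)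
  have hg0 : g 0 = f a := by simp [hg]
  have hg1 : g 1 = f b - ⟪gradient f a, v⟫ + L / 2 * ‖v‖ ^ 2 := by
    simp only [hg, one_smul]
    rw [show a + v = b by rw [hv]; abel]
    ring
  rw [hg0, hg1] at h01
  linarith

theorem stmt_12 {E : Type*} [NormedAddCommGroup E] [InnerProductSpace ℝ E]
    [CompleteSpace E]
    (f : E → ℝ) (L η ε₁ : ℝ) (hL : 0 < L) (hη : 0 < η)
    (hdiff : Differentiable ℝ f)
    (hlip : ∀ x y : E, ‖gradient f x - gradient f y‖ ≤ L * ‖x - y‖)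
    (x x' x₀ lam e : E)
    (hopt : gradient f x' + lam + (1/η) • (x' - x₀) = e)
    (he : ‖e‖^2 ≤ ε₁) :
    (f x' + (inner ℝ lam (x' - x₀) : ℝ) + ‖x' - x₀‖^2 / (2*η))
      - (f x + (inner ℝ lam (x - x₀) : ℝ) + ‖x - x₀‖^2 / (2*η))
      ≤ -((1 - 2*L*η) / (2*η)) * ‖x' - x‖^2 + ε₁ / (2*L) := by
  have hdesc := descent_aux f L hL.le hdiff hlip x' x
  have hgrad : gradient f x' = e - lam - (1/η) • (x' - x₀) := by
    rw [← hopt]; abel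
  have hkey1 : f x' - f x ≤ ⟪e, x' - x⟫ - ⟪lam, x' - x⟫
      - (1/η) * ⟪x' - x₀, x' - x⟫ + L / 2 * ‖x' - x‖ ^ 2 := by
    have h1 : ⟪gradient f x', x - x'⟫
        = -(⟪e, x' - x⟫ - ⟪lam, x' - x⟫ - (1/η) * ⟪x' - x₀, x' - x⟫) := by
      rw [hgrad, inner_sub_left, inner_sub_left, real_inner_smul_left,
        show x - x' = -(x' - x) by abel, inner_neg_right, inner_neg_right,
        inner_neg_right]
      ring
    have h2 : ‖x - x'‖ = ‖x' - x‖ := norm_sub_rev _ _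
    rw [h1, h2] at hdesc
    linarith
  have hkey2 : ⟪e, x' - x⟫ ≤ ε₁ / (2*L) + L / 2 * ‖x' - x‖ ^ 2 := by
    have h1 : ⟪e, x' - x⟫ ≤ ‖e‖ * ‖x' - x‖ := real_inner_le_norm _ _
    have h2 := sq_nonneg (‖e‖ - L * ‖x' - x‖)
    have h3 : ‖e‖ * ‖x' - x‖ ≤ ‖e‖ ^ 2 / (2*L) + L / 2 * ‖x' - x‖ ^ 2 := by
      rw [div_add' _ _ _ (by positivity), le_div_iff₀ (by positivity)]
      nlinarith
    have h4 : ‖e‖ ^ 2 / (2*L) ≤ ε₁ / (2*L) :=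
      div_le_div_of_nonneg_right he (by positivity) |>.trans_eq rfl
    linarith
  have hnorm : ‖x - x₀‖ ^ 2 = ‖x' - x₀‖ ^ 2 - 2 * ⟪x' - x₀, x' - x⟫ + ‖x' - x‖ ^ 2 := by
    rw [show x - x₀ = (x' - x₀) - (x' - x) by abel]
    exact norm_sub_sq_real _ _
  have hil : (inner ℝ lam (x' - x₀) : ℝ) = inner ℝ lam (x - x₀) + ⟪lam, x' - x⟫ := by
    rw [← inner_add_right]
    congr 1
    abel
  have e1 : ‖x' - x₀‖ ^ 2 / (2*η) - ‖x - x₀‖ ^ 2 / (2*η)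
      = (1/η) * ⟪x' - x₀, x' - x⟫ - ‖x' - x‖ ^ 2 / (2*η) := by
    rw [hnorm]; field_simp; ring
  have e2 : -((1 - 2*L*η) / (2*η)) * ‖x' - x‖ ^ 2
      = L * ‖x' - x‖ ^ 2 - ‖x' - x‖ ^ 2 / (2*η) := by
    field_simp; ring
  rw [hil, e2]
  linarith [e1, hkey1, hkey2]
end
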